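/- Let f : X → Y be continuous with X countably compact and non-compact, f(X) compact, and Y C-closed. Let 𝒰 = {U_α : α ∈ κ} be a chain cover of X indexed by a cardinal κ ≥ ω₁ (U_α open, linearly ordered by inclusion, covering X, with X ⊄ U_α for each α). Then there exists c ∈ Y such that the preimage f⁻¹({c}) is not contained in any U_α. -/

import Mathlib

/-- A subset `s` is countably compact if every countable open cover of `s`
has a finite subcover. -/
def CountablyCompactSet {X : Type*} [TopologicalSpace X] (s : Set X) : Prop :=
  ∀ U : ℕ → Set X, (∀ n, IsOpen (U n)) → s ⊆ ⋃ n, U n →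
    ∃ t : Finset ℕ, s ⊆ ⋃ n ∈ t, U n

lemma countablyCompact_image {X Y : Type*} [TopologicalSpace X] [TopologicalSpace Y]
    {s : Set X} (hs : CountablyCompactSet s) {f : X → Y} (hf : Continuous f) :
    CountablyCompactSet (f '' s) := by
  intro V hVo hVc
  obtain ⟨t, ht⟩ := hs (fun n => f ⁻¹' V n) (fun n => (hVo n).preimage hf) (by
    intro x hx
    have : f x ∈ ⋃ n, V n := hVc ⟨x, hx, rfl⟩
    simpa using this)
  refine ⟨t, ?_⟩
  rintro y ⟨x, hx, rfl⟩
  have := ht hx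
  simp only [Set.mem_iUnion] at this ⊢
  exact this

lemma countablyCompact_closed_subset {X : Type*} [TopologicalSpace X]
    (hX : CountablyCompactSet (Set.univ : Set X)) {s : Set X} (hs : IsClosed s) :
    CountablyCompactSet s := by
  intro V hVo hVc
  set W : ℕ → Set X := fun n => Nat.rec sᶜ (fun m _ => V m) n with hW
  have hWo : ∀ n, IsOpen (W n) := by
    intro n; cases n with
    | zero => exact hs.isOpen_compl
    | succ m => exact hVo m
  obtain ⟨t, ht⟩ := hX W hWo (by
    intro x _
    by_cases hx : x ∈ s
    · obtain ⟨_, ⟨n, rfl⟩, hn⟩ := hVc hx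
      exact Set.mem_iUnion.2 ⟨n + 1, hn⟩
    · exact Set.mem_iUnion.2 ⟨0, hx⟩)
  refine ⟨t.image Nat.pred, ?_⟩
  intro x hx
  have := ht (Set.mem_univ x)
  simp only [Set.mem_iUnion] at this
  obtain ⟨n, hn, hxn⟩ := this
  cases n with
  | zero => exact absurd hx hxn
  | succ m =>
      refine Set.mem_iUnion.2 ⟨m, Set.mem_iUnion.2 ⟨?_, hxn⟩⟩
      simpa using Finset.mem_image_of_mem Nat.pred hn

/-- If `X` is countably compact non-compact, `f : X → Y` is continuous with
compact image, `Y` is C-closed, and `U` is a nontrivial chain cover of `X`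
indexed by a set of cardinality at least `ℵ₁`, then some fiber of `f` is
`U`-unbounded. -/
theorem exists_unbounded_fiber {X Y : Type*} [TopologicalSpace X] [TopologicalSpace Y]
    (hX : CountablyCompactSet (Set.univ : Set X))
    (hXnc : ¬ IsCompact (Set.univ : Set X))
    (hY : ∀ s : Set Y, CountablyCompactSet s → IsClosed s)
    (f : X → Y) (hf : Continuous f) (hfX : IsCompact (f '' Set.univ))
    {ι : Type*} (hcard : Cardinal.aleph 1 ≤ Cardinal.mk ι)
    (U : ι → Set X) (hUo : ∀ i, IsOpen (U i))
    (hchain : ∀ i j, U i ⊆ U j ∨ U j ⊆ U i)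
    (hcov : (⋃ i, U i) = Set.univ)
    (hproper : ∀ i, U i ≠ Set.univ) :
    ∃ c : Y, ∀ i, ¬ f ⁻¹' {c} ⊆ U i := by
  have hι : Nonempty ι := by
    rw [← Cardinal.mk_ne_zero_iff]
    intro h
    rw [h] at hcard
    exact absurd hcard (not_le_of_gt (Cardinal.aleph_pos 1))
  set A : ι → Set X := fun i => (U i)ᶜ with hA
  have hAne : ∀ i, (A i).Nonempty := by
    intro i
    rw [Set.nonempty_compl]
    exact hproper i
  have hAcl : ∀ i, IsClosed (A i) := fun i => (hUo i).isClosed_compl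
  set Z : ι → Set Y := fun i => f '' A i with hZ
  have hZcl : ∀ i, IsClosed (Z i) :=
    fun i => hY _ (countablyCompact_image (countablyCompact_closed_subset hX (hAcl i)) hf)
  have hZcomp : ∀ i, IsCompact (Z i) := by
    intro i
    have : Z i = f '' Set.univ ∩ Z i := by
      rw [Set.inter_eq_self_of_subset_right (Set.image_mono (f := f) (Set.subset_univ _))]
    rw [this]
    exact hfX.inter_right (hZcl i)
  have hdir : Directed (· ⊇ ·) Z := by
    intro i j
    rcases hchain i j with h | h
    · exact ⟨j, Set.image_mono (f := f) (Set.compl_subset_compl.2 h), le_rfl⟩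
    · exact ⟨i, le_rfl, Set.image_mono (f := f) (Set.compl_subset_compl.2 h)⟩
  obtain ⟨c, hc⟩ := IsCompact.nonempty_iInter_of_directed_nonempty_isCompact_isClosed
    Z hdir (fun i => (hAne i).image f) hZcomp hZcl
  refine ⟨c, fun i hsub => ?_⟩
  obtain ⟨x, hxA, hxc⟩ := Set.mem_iInter.1 hc i
  exact hxA (hsub (by simpa using hxc))
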